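/- Let X be a kei and S a subset of X. Every element of the subkei of X generated by S (the smallest subset of X containing S and closed under the operation *) can be written as a left-normed product (((x₁ * x₂) * x₃) * ⋯ ) * x_k for some k ≥ 1 and elements x₁, …, x_k of S. -/

import Mathlib

/-- The subkei of `X` generated by `S`: the smallest subset of `X`
containing `S` and closed under the binary operation. -/
inductive KeiClosure {X : Type*} (op : X → X → X) (S : Set X) : X → Prop
  | base {x : X} : x ∈ S → KeiClosure op S x
  | mul {x y : X} : KeiClosure op S x → KeiClosure op S y → KeiClosure op S (op x y)

lemma stmt1_aux {X : Type*} (op : X → X → X)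
    (hK2 : ∀ a b, op (op a b) b = a)
    (hK3 : ∀ a b c, op (op a b) c = op (op a c) (op b c))
    (S : Set X) (lb : List X) (hlb : ∀ y ∈ lb, y ∈ S) (b₁ : X) (hb₁ : b₁ ∈ S) :
    ∀ a : X, (∃ (x₁ : X) (l : List X), x₁ ∈ S ∧ (∀ y ∈ l, y ∈ S) ∧ a = l.foldl op x₁) →
      ∃ (x₁ : X) (l : List X), x₁ ∈ S ∧ (∀ y ∈ l, y ∈ S) ∧
        op a (lb.foldl op b₁) = l.foldl op x₁ := by
  induction lb using List.reverseRecOn with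
  | nil =>
    rintro a ⟨x₁, l, hx₁, hl, rfl⟩
    exact ⟨x₁, l ++ [b₁], hx₁, by
      intro y hy; rcases List.mem_append.1 hy with h | h
      · exact hl y h
      · simp at h; subst h; exact hb₁, by simp⟩
  | append_singleton lb' c ih =>
    rintro a ⟨x₁, l, hx₁, hl, rfl⟩
    have hlb' : ∀ y ∈ lb', y ∈ S := fun y hy => hlb y (by simp [hy])
    have hc : c ∈ S := hlb c (by simp)
    set a := l.foldl op x₁ with ha
    set P := lb'.foldl op b₁ with hP
    have key : op a ((lb' ++ [c]).foldl op b₁) = op (op (op a c) P) c := by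
      rw [List.foldl_append]
      simp only [List.foldl_cons, List.foldl_nil]
      rw [hK3, hK2]
    rw [key]
    have hac : ∃ (x₁' : X) (l' : List X), x₁' ∈ S ∧ (∀ y ∈ l', y ∈ S) ∧
        op a c = l'.foldl op x₁' := by
      refine ⟨x₁, l ++ [c], hx₁, ?_, by simp [ha]⟩
      intro y hy; rcases List.mem_append.1 hy with h | h
      · exact hl y h
      · simp at h; subst h; exact hc
    obtain ⟨y₁, m, hy₁, hm, hrep⟩ := ih hlb' (op a c) hac
    refine ⟨y₁, m ++ [c], hy₁, ?_, by simp [← hrep]⟩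
    intro y hy; rcases List.mem_append.1 hy with h | h
    · exact hm y h
    · simp at h; subst h; exact hc

/-- In a kei `X`, every element of the subkei generated by a subset `S`
can be written as a left-normed product `(((x₁ * x₂) * x₃) * ⋯) * x_k` of elements of `S`
(with `k ≥ 1`; the product is `x₁` when `k = 1`). -/
theorem stmt1 {X : Type*} (op : X → X → X)
    (hK1 : ∀ a, op a a = a)
    (hK2 : ∀ a b, op (op a b) b = a)
    (hK3 : ∀ a b c, op (op a b) c = op (op a c) (op b c))
    (S : Set X) (x : X) (hx : KeiClosure op S x) :
    ∃ (x₁ : X) (l : List X), x₁ ∈ S ∧ (∀ y ∈ l, y ∈ S) ∧ x = l.foldl op x₁ := by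
  induction hx with
  | base h => exact ⟨_, [], h, by simp, by simp⟩
  | mul ha hb iha ihb =>
    obtain ⟨b₁, lb, hb₁, hlb, hbrep⟩ := ihb
    rw [hbrep]
    exact stmt1_aux op hK2 hK3 S lb hlb b₁ hb₁ _ iha
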